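/- Let X(x) = (1/|x-a|² - 1/ρ²)(x-a) on σ < |x-a| ≤ ρ ⊂ ℝ³, and let ν be a unit vector. Then the tangential divergence div_Σ X := div X - ⟨∇X[ν], ν⟩ equals -2/ρ² + 2|(x-a)^⊥/|x-a|²|², where (x-a)^⊥ = ⟨x-a, ν⟩ν. -/

import Mathlib

noncomputable section

abbrev E3 := EuclideanSpace ℝ (Fin 3)

/-- The full divergence of a vector field `X : ℝ³ → ℝ³`. -/
def div3 (X : E3 → E3) (x : E3) : ℝ :=
  ∑ i, fderiv ℝ X x (EuclideanSpace.single i 1) i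

/-- For `X(x) = (1/|x-a|² - 1/ρ²)(x-a)` on `σ < |x-a| ≤ ρ` and a unit vector `ν`, the
tangential divergence `div X - ⟨∇X[ν], ν⟩` equals `-2/ρ² + 2|(x-a)^⊥/|x-a|²|²`,
where `(x-a)^⊥ = ⟨x-a, ν⟩ν`. -/
theorem tangential_div_annulus_field (a : E3) (σ ρ : ℝ) (hσ : 0 < σ) (hσρ : σ < ρ)
    (ν : E3) (hν : ‖ν‖ = 1)
    (X : E3 → E3) (hX : ∀ y, X y = (1 / ‖y - a‖ ^ 2 - 1 / ρ ^ 2) • (y - a)) :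
    ∀ x : E3, σ < ‖x - a‖ → ‖x - a‖ ≤ ρ →
      div3 X x - (inner ℝ (fderiv ℝ X x ν) ν : ℝ)
        = -2 / ρ ^ 2 + 2 * ‖((inner ℝ (x - a) ν : ℝ) / ‖x - a‖ ^ 2) • ν‖ ^ 2 := by
  intro x hσx hxρ
  have hXfun : X = fun y => (1 / ‖y - a‖ ^ 2 - 1 / ρ ^ 2) • (y - a) := funext hX
  set w : E3 := x - a with hw
  have hr : (0:ℝ) < ‖w‖ := lt_trans hσ hσx
  have hr2 : (‖w‖ ^ 2 : ℝ) ≠ 0 := by positivity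
  have hρ : (ρ:ℝ) ≠ 0 := (hσ.trans hσρ).ne'
  -- derivative of y ↦ ‖y - a‖^2
  have hg : HasFDerivAt (fun y : E3 => ‖y - a‖ ^ 2) (2 • (innerSL ℝ w)) x := by
    have hg0 := ((hasFDerivAt_id x).sub_const a).norm_sq
    exact hg0.congr_fderiv (by ext v; simp [hw])
  -- derivative of the scalar coefficient
  have hc : HasFDerivAt (fun y : E3 => 1 / ‖y - a‖ ^ 2 - 1 / ρ ^ 2)
      ((-((‖w‖ ^ 2) ^ 2)⁻¹) • (2 • (innerSL ℝ w))) x := by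
    have hinv : HasDerivAt (fun t : ℝ => t⁻¹) (-((‖w‖ ^ 2) ^ 2)⁻¹) (‖w‖ ^ 2) :=
      hasDerivAt_inv hr2
    have h1 : HasFDerivAt (fun y : E3 => (‖y - a‖ ^ 2)⁻¹)
        ((-((‖w‖ ^ 2) ^ 2)⁻¹) • (2 • (innerSL ℝ w))) x :=
      hinv.comp_hasFDerivAt x hg
    have h2 := h1.sub_const (1 / ρ ^ 2)
    have heq : (fun y : E3 => 1 / ‖y - a‖ ^ 2 - 1 / ρ ^ 2)
        = fun y : E3 => (‖y - a‖ ^ 2)⁻¹ - 1 / ρ ^ 2 := by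
      funext y; rw [one_div]
    rw [heq]; exact h2
  set c : ℝ := 1 / ‖w‖ ^ 2 - 1 / ρ ^ 2 with hcdef
  set D : E3 →L[ℝ] E3 :=
    c • ContinuousLinearMap.id ℝ E3 +
      ((-((‖w‖ ^ 2) ^ 2)⁻¹) • (2 • (innerSL ℝ w))).smulRight w with hD
  have hXD : HasFDerivAt X D x := by
    rw [hXfun]
    exact hc.smul ((hasFDerivAt_id x).sub_const a)
  have hfd : fderiv ℝ X x = D := hXD.fderiv
  have hDapp : ∀ v : E3, D v = c • v + ((-((‖w‖ ^ 2) ^ 2)⁻¹) * (2 * inner ℝ w v)) • w := by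
    intro v
    simp [hD, ContinuousLinearMap.smulRight_apply, smul_smul, mul_comm]
  have hinner_single : ∀ i : Fin 3, (inner ℝ w (EuclideanSpace.single i (1:ℝ)) : ℝ) = w i := by
    intro i; rw [EuclideanSpace.inner_single_right]; simp
  have hsum : ∑ i, w i * w i = ‖w‖ ^ 2 := by
    rw [EuclideanSpace.norm_eq, Real.sq_sqrt (by positivity)]; simp [Real.norm_eq_abs, sq_abs, sq]
  have hdiv : div3 X x = 3 * c - 2 * (((‖w‖ ^ 2) ^ 2)⁻¹) * ‖w‖ ^ 2 := by
    unfold div3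
    rw [hfd]
    have hcomp : ∀ i : Fin 3, (D (EuclideanSpace.single i 1)) i
        = c + (-((‖w‖ ^ 2) ^ 2)⁻¹) * (2 * w i) * w i := by
      intro i
      rw [hDapp, hinner_single]
      simp [PiLp.add_apply, PiLp.smul_apply, smul_eq_mul]
    simp only [hcomp]
    rw [Finset.sum_add_distrib]
    have h3 : ∑ _i : Fin 3, c = 3 * c := by
      simp [Finset.sum_const]
    rw [h3]
    have : ∑ i : Fin 3, (-((‖w‖ ^ 2) ^ 2)⁻¹) * (2 * w i) * w i
        = (-((‖w‖ ^ 2) ^ 2)⁻¹) * 2 * ∑ i, w i * w i := by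
      rw [Finset.mul_sum]; congr 1; ext i; ring
    rw [this, hsum]; ring
  have hterm : (inner ℝ (fderiv ℝ X x ν) ν : ℝ)
      = c - ((‖w‖ ^ 2) ^ 2)⁻¹ * 2 * (inner ℝ w ν : ℝ) ^ 2 := by
    rw [hfd, hDapp]
    rw [inner_add_left, real_inner_smul_left, real_inner_smul_left]
    have hνν : (inner ℝ ν ν : ℝ) = 1 := by
      rw [real_inner_self_eq_norm_sq, hν]; norm_num
    rw [hνν]; ring
  rw [hdiv, hterm]
  have hnorm : ‖((inner ℝ w ν : ℝ) / ‖w‖ ^ 2) • ν‖ ^ 2 = (inner ℝ w ν : ℝ) ^ 2 / (‖w‖ ^ 2) ^ 2 := by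
    rw [norm_smul, hν, mul_one, Real.norm_eq_abs, sq_abs, div_pow]
  rw [hnorm, hcdef]
  field_simp
  ring
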